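/- Suppose the stationary measure ℙ satisfies conditions ID, FE (with constant γ_+ < 0) and KB, and let ℚ be a stationary measure with supp ℚ ⊆ supp ℙ. Let ε ∈ (0,1/2) and y ∈ supp ℚ be arbitrary, and consider the upper-bound auxiliary parsing of y_1^N with words y^{(1,N)}, …, y^{(ĉ_N,N)}. Then, with ℓ_+ := 2 ln N/(−γ_+), one has ℙ{x : at least one word y^{(j,N)}, 1 ≤ j ≤ ĉ_N, does not appear as a substring of x_1^N} ≤ N · exp(−N^{ε/4}/(3ℓ_+)) for all N large enough. -/

import Mathlib

open MeasureTheory Filter Asymptotics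
open scoped ENNReal Classical

noncomputable section

namespace ZM

/-- The left shift on one-sided sequences. -/
def shift {A : Type*} (x : ℕ → A) : ℕ → A := fun k => x (k + 1)

/-- The cylinder set of all sequences starting with the word `a`. -/
def cyl {A : Type*} {n : ℕ} (a : Fin n → A) : Set (ℕ → A) := {x | ∀ i : Fin n, x i = a i}

/-- The word `x_{p+1}^{p+ℓ}` of `x` (0-based: the letters at positions `p, …, p+ℓ-1`). -/
def seg {A : Type*} (y : ℕ → A) (p ℓ : ℕ) : Fin ℓ → A := fun i => y (p + i)

/-- `w` occurs in `x` at (0-based) offset `r`. -/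
def matchAt {A : Type*} (x : ℕ → A) {ℓ : ℕ} (w : Fin ℓ → A) (r : ℕ) : Prop :=
  ∀ i : Fin ℓ, x (r + i) = w i

/-- `w` appears as a substring of `x_1^N`. -/
def appears {A : Type*} (N : ℕ) (x : ℕ → A) {ℓ : ℕ} (w : Fin ℓ → A) : Prop :=
  ∃ r, r + ℓ ≤ N ∧ matchAt x w r

/-- The waiting time `W_ℓ(w, x)`: the least (1-based) position at which `w` occurs in `x`,
`⊤` if `w` never occurs. -/
def W {A : Type*} {ℓ : ℕ} (w : Fin ℓ → A) (x : ℕ → A) : ℕ∞ :=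
  sInf {r : ℕ∞ | ∃ n : ℕ, r = (n : ℕ∞) ∧ 1 ≤ n ∧ matchAt x w (n - 1)}

section ZMparsing

variable {A : Type*}

/-- Length of the Ziv–Merhav word starting at (0-based) position `p` of `y_1^N`, with
database `x_1^N`: the longest prefix of the remaining portion of `y_1^N` appearing as a
substring of `x_1^N`, or a single letter if there is no such prefix. -/
def zmLen (N : ℕ) (x y : ℕ → A) (p : ℕ) : ℕ :=
  max 1 (sSup {ℓ | p + ℓ ≤ N ∧ appears N x (seg y p ℓ)})

/-- Starting position of the `j`-th (0-based) word of the Ziv–Merhav parsing. -/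
def zmPos (N : ℕ) (x y : ℕ → A) : ℕ → ℕ
  | 0 => 0
  | j + 1 => zmPos N x y j + zmLen N x y (zmPos N x y j)

/-- `c_N(y|x)`: the number of words in the Ziv–Merhav parsing of `y_1^N` w.r.t. `x_1^N`. -/
def cN (N : ℕ) (x y : ℕ → A) : ℕ := sInf {c | N ≤ zmPos N x y c}

/-- The Ziv–Merhav estimator `Q̂_N(y, x) = c_N(y|x) ln N / N`. -/
def ZMest (N : ℕ) (x y : ℕ → A) : ℝ := (cN N x y : ℝ) * Real.log N / N

end ZMparsing

section MeasureDefs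

variable {A : Type*} [MeasurableSpace A]

/-- The measure of the cylinder of a word, as a real number. -/
def wp (μ : Measure (ℕ → A)) {n : ℕ} (a : Fin n → A) : ℝ := (μ (cyl a)).toReal

/-- `supp ℙ`: the set of sequences all of whose prefixes have positive measure. -/
def suppSet (μ : Measure (ℕ → A)) : Set (ℕ → A) := {x | ∀ n, 0 < μ (cyl (seg x 0 n))}

/-- Condition (ID): immediate decoupling on the support, with sequence `k`. -/
def CondID (μ : Measure (ℕ → A)) (k : ℕ → ℝ) : Prop :=
  Monotone k ∧ (k =o[atTop] fun n => (n : ℝ)) ∧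
    ∀ (n m : ℕ) (a : Fin n → A) (b : Fin m → A), 0 < μ (cyl a) → 0 < μ (cyl b) →
      wp μ (Fin.append a b) ≤ Real.exp (k n) * (wp μ a * wp μ b) ∧
      (0 < μ (cyl (Fin.append a b)) →
        Real.exp (-k n) * (wp μ a * wp μ b) ≤ wp μ (Fin.append a b))

/-- Condition (FE): fast enough decay, with rate `γp < 0`. -/
def CondFE (μ : Measure (ℕ → A)) (γp : ℝ) : Prop :=
  γp < 0 ∧ ∀ᶠ n : ℕ in atTop, ∀ a : Fin n → A, 0 < μ (cyl a) → wp μ a ≤ Real.exp (γp * n)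

/-- Condition (SE): slow enough decay, with rate `γm < 0`. -/
def CondSE (μ : Measure (ℕ → A)) (γm : ℝ) : Prop :=
  γm < 0 ∧ ∀ᶠ n : ℕ in atTop, ∀ a : Fin n → A, 0 < μ (cyl a) → Real.exp (γm * n) ≤ wp μ a

/-- Condition (KB): Kontoyiannis' bound on waiting times, with sequences `k`, `τ`. -/
def CondKB (μ : Measure (ℕ → A)) (k τ : ℕ → ℝ) : Prop :=
  (k =o[atTop] fun n => (n : ℝ)) ∧ (τ =o[atTop] fun n => (n : ℝ)) ∧
    ∀ (ℓ : ℕ) (a : Fin ℓ → A) (r : ℕ),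
      (μ {x | (r : ℕ∞) ≤ W a x}).toReal ≤
        Real.exp (-(Real.exp (-k ℓ) * wp μ a * (⌊((r : ℝ) - 1) / ((ℓ : ℝ) + τ ℓ)⌋ : ℝ)))

/-- Length of the next word of the auxiliary parsing of `y_1^N` starting at position `p`:
the shortest prefix of the remaining portion of `y_1^N` with measure at most `θ`, or the
whole remaining portion if there is no such prefix. -/
def auxLen (μ : Measure (ℕ → A)) (θ : ℝ) (N : ℕ) (y : ℕ → A) (p : ℕ) : ℕ :=
  if ∃ ℓ, 1 ≤ ℓ ∧ p + ℓ ≤ N ∧ wp μ (seg y p ℓ) ≤ θ then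
    sInf {ℓ | 1 ≤ ℓ ∧ p + ℓ ≤ N ∧ wp μ (seg y p ℓ) ≤ θ}
  else N - p

/-- Starting position of the `j`-th (0-based) word of the auxiliary parsing. -/
def auxPos (μ : Measure (ℕ → A)) (θ : ℝ) (N : ℕ) (y : ℕ → A) : ℕ → ℕ
  | 0 => 0
  | j + 1 => auxPos μ θ N y j + max 1 (auxLen μ θ N y (auxPos μ θ N y j))

/-- Length of the `j`-th (0-based) word of the auxiliary parsing. -/
def auxWordLen (μ : Measure (ℕ → A)) (θ : ℝ) (N : ℕ) (y : ℕ → A) (j : ℕ) : ℕ :=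
  max 1 (auxLen μ θ N y (auxPos μ θ N y j))

/-- The number of words in the auxiliary parsing of `y_1^N`. -/
def auxCount (μ : Measure (ℕ → A)) (θ : ℝ) (N : ℕ) (y : ℕ → A) : ℕ :=
  sInf {c | N ≤ auxPos μ θ N y c}

/-- Length of the next word of the block parsing within a block ending at position `e`:
the shortest prefix of the remaining portion of the block with measure at most `θ`;
`0` encodes that no such prefix exists (the rest of the block is the buffer). -/
def blkLen (μ : Measure (ℕ → A)) (θ : ℝ) (e : ℕ) (y : ℕ → A) (p : ℕ) : ℕ :=
  sInf {ℓ | 1 ≤ ℓ ∧ p + ℓ ≤ e ∧ wp μ (seg y p ℓ) ≤ θ}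

/-- Starting position of the `i`-th (0-based) word of the block starting at `q`, ending at `e`. -/
def blkPos (μ : Measure (ℕ → A)) (θ : ℝ) (e : ℕ) (y : ℕ → A) (q : ℕ) : ℕ → ℕ
  | 0 => q
  | i + 1 => blkPos μ θ e y q i + blkLen μ θ e y (blkPos μ θ e y q i)

/-- Number `d_s` of words in the block starting at `q` and ending at `e`. -/
def dCount (μ : Measure (ℕ → A)) (θ : ℝ) (e : ℕ) (y : ℕ → A) (q : ℕ) : ℕ :=
  sInf {i | blkLen μ θ e y (blkPos μ θ e y q i) = 0}

/-- The block starting at `q` and ending at `e` is good: its parsed words are pairwise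
distinct. -/
def GoodBlock (μ : Measure (ℕ → A)) (θ : ℝ) (e : ℕ) (y : ℕ → A) (q : ℕ) : Prop :=
  ∀ i j : ℕ, i < dCount μ θ e y q → j < dCount μ θ e y q →
    blkLen μ θ e y (blkPos μ θ e y q i) = blkLen μ θ e y (blkPos μ θ e y q j) →
    (∀ t < blkLen μ θ e y (blkPos μ θ e y q i),
      y (blkPos μ θ e y q i + t) = y (blkPos μ θ e y q j + t)) →
    i = j

end MeasureDefs

/-- The block length `⌊N^α⌋`. -/
def blockB (N : ℕ) (α : ℝ) : ℕ := ⌊(N : ℝ) ^ α⌋₊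

/-- The number `M_N` of blocks. -/
def blockM (N : ℕ) (α : ℝ) : ℕ := (N + blockB N α - 1) / blockB N α

/-- The starting position of the `s`-th (0-based) block. -/
def blockStart (N : ℕ) (α : ℝ) (s : ℕ) : ℕ := s * blockB N α

/-- The end position of the `s`-th (0-based) block. -/
def blockEnd (N : ℕ) (α : ℝ) (s : ℕ) : ℕ := min ((s + 1) * blockB N α) N

/-- `S_b(y_1^N)`: the set of bad blocks of the block auxiliary parsing (with threshold
`N^{-1-ε}`, word probabilities computed with `μ`). -/
def badSet {A : Type*} [MeasurableSpace A] (μ : Measure (ℕ → A)) (N : ℕ) (α ε : ℝ)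
    (y : ℕ → A) : Set ℕ :=
  {s | s < blockM N α ∧
    ¬ GoodBlock μ ((N : ℝ) ^ (-1 - ε)) (blockEnd N α s) y (blockStart N α s)}

/-- `ℓ₋ = ln N / (-2 γ₋)`. -/
def ellMinus (N : ℕ) (γm : ℝ) : ℝ := Real.log N / (-2 * γm)

/-- `ℓ₊ = 2 ln N / (-γ₊)`. -/
def ellPlus (N : ℕ) (γp : ℝ) : ℝ := 2 * Real.log N / (-γp)

/-- `d₊ = 2 N^α / ℓ₋`. -/
def dPlus (N : ℕ) (α γm : ℝ) : ℝ := 2 * (N : ℝ) ^ α / ellMinus N γm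

section CrossEntropy

variable {A : Type*} [MeasurableSpace A] [Fintype A]

/-- The `n`-th cross-entropy average `-(1/n) ∑_{a ∈ 𝒜ⁿ} ℚ[a] ln ℙ[a]`, real-valued version. -/
def hcSeq (μP μQ : Measure (ℕ → A)) (n : ℕ) : ℝ :=
  -(1 / (n : ℝ)) * ∑ a : Fin n → A, wp μQ a * Real.log (wp μP a)

/-- `-ln p` as an element of `[0, ∞]`, for `p ∈ [0, 1]`; equals `⊤` when `p = 0`. -/
def negLog (p : ℝ≥0∞) : ℝ≥0∞ := if p = 0 then ⊤ else ENNReal.ofReal (-Real.log p.toReal)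

/-- The `n`-th cross-entropy average, `[0, ∞]`-valued version. -/
def hcSeqE (μP μQ : Measure (ℕ → A)) (n : ℕ) : ℝ≥0∞ :=
  (∑ a : Fin n → A, μQ (cyl a) * negLog (μP (cyl a))) / (n : ℝ≥0∞)

end CrossEntropy

end ZM

namespace ZM

section Aux

variable {A : Type*} [MeasurableSpace A]

set_option linter.unusedSectionVars false

lemma seg_append (y : ℕ → A) (p m n : ℕ) :
    Fin.append (seg y p m) (seg y (p + m) n) = seg y p (m + n) := by
  funext i
  rcases lt_or_ge (i : ℕ) m with h | h
  · have hi : i = Fin.castAdd n ⟨i, h⟩ := by ext; simp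
    rw [hi, Fin.append_left]
    simp [seg]
  · have hi : i = Fin.natAdd m ⟨(i : ℕ) - m, by omega⟩ := by ext; simp; omega
    rw [hi, Fin.append_right]
    simp only [seg, Fin.natAdd_mk]
    congr 1
    omega

lemma shift_iterate (x : ℕ → A) (p k : ℕ) : (shift^[p] x) k = x (k + p) := by
  induction p generalizing k with
  | zero => rfl
  | succ p ih => rw [Function.iterate_succ_apply', shift]; rw [ih]; ring_nf

lemma seg_pos (μ : Measure (ℕ → A)) [IsProbabilityMeasure μ]
    (hstat : MeasurePreserving shift μ μ) {y : ℕ → A} (hy : y ∈ suppSet μ) (p n : ℕ) :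
    0 < μ (cyl (seg y p n)) := by
  have h1 : 0 < μ (cyl (seg y 0 (p + n))) := hy (p + n)
  have hsub : cyl (seg y 0 (p + n)) ⊆ (shift^[p]) ⁻¹' cyl (seg y p n) := by
    intro x hx i
    have := hx ⟨p + (i : ℕ), by omega⟩
    simp only [seg] at this ⊢
    rw [shift_iterate]
    simpa [Nat.add_comm] using this
  calc (0 : ℝ≥0∞) < μ (cyl (seg y 0 (p + n))) := h1
    _ ≤ μ ((shift^[p]) ⁻¹' cyl (seg y p n)) := measure_mono hsub
    _ ≤ (μ.map (shift^[p])) (cyl (seg y p n)) :=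
        Measure.le_map_apply (hstat.iterate p).measurable.aemeasurable _
    _ = μ (cyl (seg y p n)) := by rw [(hstat.iterate p).map_eq]

lemma wp_nonneg (μ : Measure (ℕ → A)) {n : ℕ} (a : Fin n → A) : 0 ≤ wp μ a :=
  ENNReal.toReal_nonneg

lemma wp_le_one (μ : Measure (ℕ → A)) [IsProbabilityMeasure μ] {n : ℕ} (a : Fin n → A) :
    wp μ a ≤ 1 := by
  have := measure_mono (μ := μ) (Set.subset_univ (cyl a))
  rw [measure_univ] at this
  simpa [wp] using ENNReal.toReal_mono (by norm_num) this

lemma wp_pos (μ : Measure (ℕ → A)) [IsProbabilityMeasure μ] {n : ℕ} {a : Fin n → A}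
    (h : 0 < μ (cyl a)) : 0 < wp μ a :=
  ENNReal.toReal_pos h.ne' (measure_ne_top μ _)

lemma not_appears_W {N ℓ : ℕ} (w : Fin ℓ → A) (hℓ : ℓ ≤ N) :
    {x : ℕ → A | ¬ appears N x w} ⊆ {x | ((N - ℓ + 2 : ℕ) : ℕ∞) ≤ W w x} := by
  intro x hx
  simp only [Set.mem_setOf_eq, W]
  refine le_sInf ?_
  rintro r ⟨n, rfl, hn1, hmatch⟩
  rw [Nat.cast_le]
  by_contra h
  push_neg at h
  exact hx ⟨n - 1, by omega, hmatch⟩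

lemma not_appears_mono {N : ℕ} (x y : ℕ → A) {p ℓ q ℓ' : ℕ}
    (hq : q ≤ p) (hcov : p + ℓ ≤ q + ℓ') :
    ¬ appears N x (seg y p ℓ) → ¬ appears N x (seg y q ℓ') := by
  intro h hap
  obtain ⟨r, hr, hm⟩ := hap
  refine h ⟨r + (p - q), by omega, fun i => ?_⟩
  have := hm ⟨(p - q) + (i : ℕ), by omega⟩
  simp only [seg] at this ⊢
  rw [show r + (p - q) + (i : ℕ) = r + ((p - q) + (i : ℕ)) by omega, this]
  congr 1
  omega
variable (μ : Measure (ℕ → A)) (θ : ℝ) (N : ℕ) (y : ℕ → A)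

lemma auxPos_ge (j : ℕ) : j ≤ auxPos μ θ N y j := by
  induction j with
  | zero => simp [auxPos]
  | succ j ih =>
    have : 1 ≤ max 1 (auxLen μ θ N y (auxPos μ θ N y j)) := le_max_left _ _
    simp only [auxPos]
    omega

lemma auxCount_le : auxCount μ θ N y ≤ N :=
  Nat.sInf_le (auxPos_ge μ θ N y N)

lemma auxPos_lt {j : ℕ} (hj : j < auxCount μ θ N y) : auxPos μ θ N y j < N := by
  have := Nat.notMem_of_lt_sInf hj
  simp only [Set.mem_setOf_eq, not_le] at this
  exact this

lemma word_spec {j : ℕ} (hj : j < auxCount μ θ N y) :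
    1 ≤ auxWordLen μ θ N y j ∧
    auxPos μ θ N y j + auxWordLen μ θ N y j ≤ N ∧
    (2 ≤ auxWordLen μ θ N y j →
      θ < wp μ (seg y (auxPos μ θ N y j) (auxWordLen μ θ N y j - 1))) := by
  set p := auxPos μ θ N y j with hp
  have hpN : p < N := auxPos_lt μ θ N y hj
  by_cases h : ∃ ℓ, 1 ≤ ℓ ∧ p + ℓ ≤ N ∧ wp μ (seg y p ℓ) ≤ θ
  · have hL : auxLen μ θ N y p = sInf {ℓ | 1 ≤ ℓ ∧ p + ℓ ≤ N ∧ wp μ (seg y p ℓ) ≤ θ} := by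
      rw [auxLen, if_pos h]
    have hmem := Nat.sInf_mem (s := {ℓ | 1 ≤ ℓ ∧ p + ℓ ≤ N ∧ wp μ (seg y p ℓ) ≤ θ}) h
    obtain ⟨h1, h2, h3⟩ := hmem
    have hw : auxWordLen μ θ N y j = auxLen μ θ N y p := by
      rw [auxWordLen, ← hp, hL]; omega
    refine ⟨by omega, by rw [hw, hL]; omega, fun h2' => ?_⟩
    rw [hw, hL] at h2' ⊢
    by_contra hc
    push_neg at hc
    have : sInf {ℓ | 1 ≤ ℓ ∧ p + ℓ ≤ N ∧ wp μ (seg y p ℓ) ≤ θ} - 1 ∈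
        {ℓ | 1 ≤ ℓ ∧ p + ℓ ≤ N ∧ wp μ (seg y p ℓ) ≤ θ} := ⟨by omega, by omega, hc⟩
    have := Nat.sInf_le this
    omega
  · have hL : auxLen μ θ N y p = N - p := by rw [auxLen, if_neg h]
    push_neg at h
    have hw : auxWordLen μ θ N y j = N - p := by rw [auxWordLen, ← hp, hL]; omega
    refine ⟨by omega, by omega, fun h2' => ?_⟩
    rw [hw] at h2' ⊢
    by_contra hc
    push_neg at hc
    exact absurd hc (not_le_of_gt (h (N - p - 1) (by omega) (by omega)))
lemma failure_le (μ : Measure (ℕ → A)) [IsProbabilityMeasure μ] {kKB τKB : ℕ → ℝ}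
    (hKB : CondKB μ kKB τKB) {N ℓ : ℕ} (w : Fin ℓ → A) (hℓ : ℓ ≤ N) :
    μ {x | ¬ appears N x w} ≤ ENNReal.ofReal (Real.exp (-(Real.exp (-kKB ℓ) * wp μ w *
      (⌊((N : ℝ) - (ℓ : ℝ) + 1) / ((ℓ : ℝ) + τKB ℓ)⌋ : ℝ)))) := by
  have h1 := measure_mono (μ := μ) (not_appears_W w hℓ)
  have h2 := hKB.2.2 ℓ w (N - ℓ + 2)
  have hc : ((N - ℓ + 2 : ℕ) : ℝ) - 1 = (N : ℝ) - (ℓ : ℝ) + 1 := by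
    have : ((N - ℓ + 2 : ℕ) : ℝ) = (N : ℝ) - (ℓ : ℝ) + 2 := by
      push_cast [hℓ]; ring
    rw [this]; ring
  rw [hc] at h2
  calc μ {x | ¬ appears N x w} ≤ μ {x | ((N - ℓ + 2 : ℕ) : ℕ∞) ≤ W w x} := h1
    _ = ENNReal.ofReal (μ {x | ((N - ℓ + 2 : ℕ) : ℕ∞) ≤ W w x}).toReal :=
        (ENNReal.ofReal_toReal (measure_ne_top μ _)).symm
    _ ≤ _ := ENNReal.ofReal_le_ofReal h2

end Aux

set_option maxHeartbeats 2000000 in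
/-- **Lemma 3.3.** Under (ID), (FE), (KB) for `ℙ`, for `y ∈ supp ℚ ⊆ supp ℙ`, the
probability that some word of the upper-bound auxiliary parsing of `y_1^N` (with threshold
`N^{-1+ε}`) fails to appear in `x_1^N` is at most `N exp(-N^{ε/4}/(3 ℓ₊))`, for `N` large
enough. -/
theorem key_prob_ub {A : Type*} [Fintype A] [MeasurableSpace A]
    (μP μQ : Measure (ℕ → A)) [IsProbabilityMeasure μP] [IsProbabilityMeasure μQ]
    (hPstat : MeasurePreserving shift μP μP)
    (hQstat : MeasurePreserving shift μQ μQ)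
    (kP kKB τKB : ℕ → ℝ) (γP : ℝ)
    (hPID : CondID μP kP) (hPFE : CondFE μP γP) (hPKB : CondKB μP kKB τKB)
    (hsupp : suppSet μQ ⊆ suppSet μP)
    (ε : ℝ) (hε : 0 < ε ∧ ε < 1 / 2) (y : ℕ → A) (hy : y ∈ suppSet μQ) :
    ∀ᶠ N : ℕ in atTop,
      (μP {x | ∃ j < auxCount μP ((N : ℝ) ^ (-1 + ε)) N y,
          ¬ appears N x (seg y (auxPos μP ((N : ℝ) ^ (-1 + ε)) N y j)
            (auxWordLen μP ((N : ℝ) ^ (-1 + ε)) N y j))}).toReal ≤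
        (N : ℝ) * Real.exp (-(N : ℝ) ^ (ε / 4) / (3 * ellPlus N γP)) := by
  obtain ⟨hε0, hε2⟩ := hε
  have hyP : y ∈ suppSet μP := hsupp hy
  obtain ⟨hγ, hFE⟩ := hPFE
  set G : ℝ := -γP with hGdef
  have hG : 0 < G := by simp only [hGdef]; linarith
  set δ : ℝ := ε * G / 32 with hδdef
  have hδ : 0 < δ := by positivity
  -- thresholds from little-o conditions
  obtain ⟨nk, hnk⟩ := eventually_atTop.1 (hPKB.1.def hδ)
  obtain ⟨nτ, hnτ⟩ := eventually_atTop.1 (hPKB.2.1.def (by norm_num : (0:ℝ) < 1/2))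
  obtain ⟨np, hnp⟩ := eventually_atTop.1 (hPID.2.1.def hδ)
  obtain ⟨nF, hnF⟩ := eventually_atTop.1 hFE
  set n₁ : ℕ := max (max nk nτ) 1 with hn₁def
  have hn₁1 : 1 ≤ n₁ := le_max_right _ _
  have hn₁k : nk ≤ n₁ := le_trans (le_max_left _ _) (le_max_left _ _)
  have hn₁τ : nτ ≤ n₁ := le_trans (le_max_right _ _) (le_max_left _ _)
  -- minimal letter probability
  have hne1 : (Finset.univ.filter fun a : Fin 1 → A => 0 < μP (cyl a)).Nonempty :=
    ⟨seg y 0 1, Finset.mem_filter.2 ⟨Finset.mem_univ _, seg_pos μP hPstat hyP 0 1⟩⟩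
  set p₀ := (Finset.univ.filter fun a : Fin 1 → A => 0 < μP (cyl a)).inf' hne1 (wp μP)
    with hp₀def
  have hp₀pos : 0 < p₀ := by
    rw [hp₀def, Finset.lt_inf'_iff]
    exact fun b hb => wp_pos μP (Finset.mem_filter.1 hb).2
  have hp₀le : ∀ (a : Fin 1 → A), 0 < μP (cyl a) → p₀ ≤ wp μP a := by
    intro a h
    exact Finset.inf'_le (wp μP) (Finset.mem_filter.2 ⟨Finset.mem_univ a, h⟩)
  have hp₀1 : p₀ ≤ 1 := le_trans (hp₀le _ (seg_pos μP hPstat hyP 0 1)) (wp_le_one μP _)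
  -- minimal probability of positive words of length n₁
  have hne2 : (Finset.univ.filter fun a : Fin n₁ → A => 0 < μP (cyl a)).Nonempty :=
    ⟨seg y 0 n₁, Finset.mem_filter.2 ⟨Finset.mem_univ _, seg_pos μP hPstat hyP 0 n₁⟩⟩
  set c₁ := (Finset.univ.filter fun a : Fin n₁ → A => 0 < μP (cyl a)).inf' hne2 (wp μP)
    with hc₁def
  have hc₁pos : 0 < c₁ := by
    rw [hc₁def, Finset.lt_inf'_iff]
    exact fun b hb => wp_pos μP (Finset.mem_filter.1 hb).2
  have hc₁le : ∀ (a : Fin n₁ → A), 0 < μP (cyl a) → c₁ ≤ wp μP a := by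
    intro a h
    exact Finset.inf'_le (wp μP) (Finset.mem_filter.2 ⟨Finset.mem_univ a, h⟩)
  -- constants for the short-word case
  set D : ℝ := (n₁ : ℝ) + τKB n₁ with hDdef
  have hτn₁ : |τKB n₁| ≤ (n₁ : ℝ) / 2 := by
    have := hnτ n₁ hn₁τ
    rw [Real.norm_eq_abs, Real.norm_natCast] at this
    linarith
  have hDlb : (n₁ : ℝ) / 2 ≤ D := by
    have := abs_le.1 hτn₁
    rw [hDdef]; linarith [this.1]
  have hDub : D ≤ 3 * (n₁ : ℝ) / 2 := by
    have := abs_le.1 hτn₁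
    rw [hDdef]; linarith [this.2]
  have hDpos : 0 < D := by
    have : (1 : ℝ) ≤ (n₁ : ℝ) := by exact_mod_cast hn₁1
    linarith
  set a₁ : ℝ := Real.exp (-kKB n₁) with ha₁def
  have ha₁pos : 0 < a₁ := Real.exp_pos _
  set K : ℝ := G * D / (3 * a₁ * c₁) with hKdef
  clear_value G δ p₀ c₁ D a₁ K
  -- concatenation lower bound from (ID)
  have hconcat : ∀ p m : ℕ, Real.exp (-kP m) *
      (wp μP (seg y p m) * wp μP (seg y (p + m) 1)) ≤ wp μP (seg y p (m + 1)) := by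
    intro p m
    have h := (hPID.2.2 m 1 (seg y p m) (seg y (p + m) 1)
      (seg_pos μP hPstat hyP p m) (seg_pos μP hPstat hyP (p + m) 1)).2
    rw [seg_append] at h
    exact h (seg_pos μP hPstat hyP p (m + 1))
  -- eventual conditions
  have F1a : ∀ᶠ N : ℕ in atTop, 3 ≤ N := eventually_ge_atTop 3
  have F1b : ∀ᶠ N : ℕ in atTop, n₁ ≤ N := eventually_ge_atTop n₁
  have htl : Tendsto (fun N : ℕ => Real.log N) atTop atTop :=
    Real.tendsto_log_atTop.comp tendsto_natCast_atTop_atTop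
  have F2 : ∀ᶠ N : ℕ in atTop, G * ((nF : ℝ) + 1) / 2 ≤ Real.log N :=
    htl.eventually_ge_atTop _
  have F3 : ∀ᶠ N : ℕ in atTop, G / (1 + ε) ≤ Real.log N := htl.eventually_ge_atTop _
  have F4 : ∀ᶠ N : ℕ in atTop, G * (np : ℝ) / 2 ≤ Real.log N := htl.eventually_ge_atTop _
  have F5 : ∀ᶠ N : ℕ in atTop, 1 ≤ Real.log N := htl.eventually_ge_atTop _
  have F6 : ∀ᶠ N : ℕ in atTop, Real.log N ≤ G / 10 * (N : ℝ) := by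
    have h := Real.isLittleO_log_id_atTop.def (by positivity : (0:ℝ) < G / 10)
    filter_upwards [tendsto_natCast_atTop_atTop.eventually h,
      eventually_ge_atTop 1] with N h1 h2
    have hN1 : (1 : ℝ) ≤ (N : ℝ) := by exact_mod_cast h2
    rw [Real.norm_eq_abs, Real.norm_eq_abs, id] at h1
    calc Real.log N ≤ |Real.log N| := le_abs_self _
      _ ≤ G / 10 * |(N : ℝ)| := h1
      _ = G / 10 * (N : ℝ) := by rw [abs_of_nonneg (by linarith)]
  have F7 : ∀ᶠ N : ℕ in atTop, Real.exp δ / p₀ ≤ (N : ℝ) ^ (5 * ε / 8) :=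
    ((tendsto_rpow_atTop (by positivity : 0 < 5 * ε / 8)).comp
      tendsto_natCast_atTop_atTop).eventually_ge_atTop _
  have F8 : ∀ᶠ N : ℕ in atTop, K ≤ (N : ℝ) ^ ((1 : ℝ) / 2) :=
    ((tendsto_rpow_atTop (by norm_num : (0:ℝ) < 1 / 2)).comp
      tendsto_natCast_atTop_atTop).eventually_ge_atTop _
  have F9 : ∀ᶠ N : ℕ in atTop, 2 * ((n₁ : ℝ) + D) ≤ (N : ℝ) :=
    tendsto_natCast_atTop_atTop.eventually_ge_atTop _
  filter_upwards [F1a, F1b, F2, F3, F4, F5, F6, F7, F8, F9]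
    with N h3N hn₁N hF2 hF3 hF4 hF5 hF6 hF7 hF8 hF9
  set n : ℝ := (N : ℝ) with hndef
  have hn3 : (3 : ℝ) ≤ n := by rw [hndef]; exact_mod_cast h3N
  have hn0 : 0 < n := by linarith
  have hn1 : 1 ≤ n := by linarith
  clear_value n
  set l : ℝ := Real.log n with hldef
  have hl1 : 1 ≤ l := hF5
  have hl0 : 0 < l := by linarith
  clear_value l
  have hF2' : G * ((nF : ℝ) + 1) / 2 ≤ l := hF2
  have hF4' : G * (np : ℝ) / 2 ≤ l := hF4
  have hF6' : l ≤ G / 10 * n := hF6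
  have hF7' : Real.exp δ / p₀ ≤ n ^ (5 * ε / 8) := hF7
  have hF8' : K ≤ n ^ ((1:ℝ) / 2) := hF8
  have hF9' : 2 * ((n₁ : ℝ) + D) ≤ n := hF9
  set Lr : ℝ := 2 * l / G with hLrdef
  have hLrpos : 0 < Lr := by rw [hLrdef]; positivity
  have hLrnF : (nF : ℝ) + 1 ≤ Lr := by
    rw [hLrdef, le_div_iff₀ hG]; linarith only [hF2']
  have hLr1 : 1 ≤ Lr := by
    have : (0:ℝ) ≤ (nF : ℝ) := Nat.cast_nonneg _
    linarith
  have hLrnp : (np : ℝ) ≤ Lr := by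
    rw [hLrdef, le_div_iff₀ hG]; linarith only [hF4']
  have hLrn : 5 * Lr ≤ n := by
    have h : Lr ≤ n / 5 := by
      rw [hLrdef, div_le_div_iff₀ hG (by norm_num : (0:ℝ) < 5)]
      linarith only [hF6']
    linarith only [h]
  clear_value Lr
  set θ : ℝ := n ^ (-1 + ε) with hθdef
  have hθpos : 0 < θ := Real.rpow_pos_of_pos hn0 _
  have hθ1 : θ ≤ 1 := Real.rpow_le_one_of_one_le_of_nonpos hn1 (by linarith)
  have hθexp : θ = Real.exp (l * (-1 + ε)) := by
    rw [hθdef, Real.rpow_def_of_pos hn0, hldef]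
  clear_value θ
  set T : ℝ := n ^ (ε / 4) / (3 * Lr) with hTdef
  have hTpos : 0 < T := by rw [hTdef]; positivity
  clear_value T
  have hell : ellPlus N γP = Lr := by
    rw [hLrdef, hldef, hndef, hGdef]; simp only [ellPlus]
  rw [hell, show -n ^ (ε / 4) / (3 * Lr) = -T by rw [hTdef]; ring]
  -- per-word bound
  set c := auxCount μP θ N y with hcdef
  have hkey : ∀ j, j < c →
      μP {x | ¬ appears N x (seg y (auxPos μP θ N y j) (auxWordLen μP θ N y j))}
        ≤ ENNReal.ofReal (Real.exp (-T)) := by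
    intro j hj
    obtain ⟨h1ℓ, hfit, hpre⟩ := word_spec μP θ N y hj
    set p := auxPos μP θ N y j with hpdef
    set ℓ := auxWordLen μP θ N y j with hℓdef
    have hℓ1r : (1 : ℝ) ≤ (ℓ : ℝ) := by exact_mod_cast h1ℓ
    have hwpos : 0 < wp μP (seg y p ℓ) := wp_pos μP (seg_pos μP hPstat hyP p ℓ)
    by_cases hcase : n₁ ≤ ℓ
    · -- long words
      have hlen : (ℓ : ℝ) ≤ Lr := by
        rcases eq_or_lt_of_le h1ℓ with h1 | h2
        · rw [← h1]; exact_mod_cast hLr1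
        · have hθpre := hpre (by omega)
          by_cases hsm : ℓ - 1 < nF
          · have : (ℓ : ℝ) ≤ (nF : ℝ) := by exact_mod_cast (by omega : ℓ ≤ nF)
            linarith
          · push_neg at hsm
            have hfe := hnF (ℓ - 1) hsm (seg y p (ℓ - 1))
              (seg_pos μP hPstat hyP p (ℓ - 1))
            have hcast : ((ℓ - 1 : ℕ) : ℝ) = (ℓ : ℝ) - 1 := by
              push_cast [h1ℓ]; ring
            have hlt : Real.exp (l * (-1 + ε)) < Real.exp (γP * ((ℓ : ℝ) - 1)) := by
              rw [← hθexp, ← hcast]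
              exact lt_of_lt_of_le hθpre hfe
            have hee := Real.exp_lt_exp.1 hlt
            have hγG : γP = -G := by rw [hGdef]; ring
            rw [hγG] at hee
            have hG1 : G ≤ (1 + ε) * l := by
              have := hF3
              rw [div_le_iff₀ (by linarith : (0:ℝ) < 1 + ε)] at this
              linarith
            rw [hLrdef, le_div_iff₀ hG]
            linarith only [hee, hG1]
      -- probability lower bound for the word
      have hlb : Real.exp (-(δ * (Lr + 1))) * (p₀ * θ) ≤ wp μP (seg y p ℓ) := by
        have hexp1 : Real.exp (-(δ * (Lr + 1))) ≤ 1 := by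
          rw [Real.exp_le_one_iff]
          have h1 : 0 < δ * (Lr + 1) := mul_pos hδ (by linarith only [hLrpos])
          linarith only [h1]
        obtain ⟨m, hm⟩ : ∃ m, ℓ = m + 1 := ⟨ℓ - 1, by omega⟩
        rcases Nat.eq_zero_or_pos m with hm0 | hm1
        · -- single letter
          have hp1 : p₀ ≤ wp μP (seg y p ℓ) := by
            subst hm0; rw [hm] at hwpos ⊢
            exact hp₀le _ (seg_pos μP hPstat hyP p 1)
          calc Real.exp (-(δ * (Lr + 1))) * (p₀ * θ)
              ≤ 1 * (p₀ * θ) := mul_le_mul_of_nonneg_right hexp1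
                (mul_nonneg hp₀pos.le hθpos.le)
            _ = p₀ * θ := one_mul _
            _ ≤ p₀ * 1 := mul_le_mul_of_nonneg_left hθ1 hp₀pos.le
            _ = p₀ := mul_one _
            _ ≤ wp μP (seg y p ℓ) := hp1
        · -- ℓ = m+1, m ≥ 1
          have hθpre := hpre (by omega)
          have hm' : ℓ - 1 = m := by omega
          rw [hm'] at hθpre
          -- kP m ≤ δ (Lr + 1)
          have hmLr : (m : ℝ) ≤ Lr := by
            have : (m : ℝ) ≤ (ℓ : ℝ) := by exact_mod_cast (by omega : m ≤ ℓ)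
            linarith
          set Ln := ⌈Lr⌉₊ with hLndef
          have hmLn : m ≤ Ln := by
            have h1 : (m : ℝ) ≤ (Ln : ℝ) := le_trans hmLr (Nat.le_ceil Lr)
            exact_mod_cast h1
          have hnpLn : np ≤ Ln := by
            have h1 : (np : ℝ) ≤ (Ln : ℝ) := le_trans hLrnp (Nat.le_ceil Lr)
            exact_mod_cast h1
          have hLnLr : (Ln : ℝ) ≤ Lr + 1 := le_of_lt (Nat.ceil_lt_add_one hLrpos.le)
          have hkPm : kP m ≤ δ * (Lr + 1) := by
            have h1 : kP m ≤ kP Ln := hPID.1 hmLn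
            have h2 := hnp Ln hnpLn
            rw [Real.norm_eq_abs, Real.norm_natCast] at h2
            have h3 : kP Ln ≤ δ * (Ln : ℝ) := le_trans (le_abs_self _) h2
            have h4 : δ * (Ln : ℝ) ≤ δ * (Lr + 1) := mul_le_mul_of_nonneg_left hLnLr hδ.le
            linarith only [h1, h3, h4]
          have hexp2 : Real.exp (-(δ * (Lr + 1))) ≤ Real.exp (-kP m) :=
            Real.exp_le_exp.2 (by linarith)
          have hlet : p₀ ≤ wp μP (seg y (p + m) 1) :=
            hp₀le _ (seg_pos μP hPstat hyP (p + m) 1)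
          have hwm : θ ≤ wp μP (seg y p m) := le_of_lt hθpre
          have hc1 := hconcat p m
          rw [← hm] at hc1
          calc Real.exp (-(δ * (Lr + 1))) * (p₀ * θ)
              ≤ Real.exp (-kP m) * (p₀ * θ) :=
                mul_le_mul_of_nonneg_right hexp2 (mul_nonneg hp₀pos.le hθpos.le)
            _ ≤ Real.exp (-kP m) * (wp μP (seg y p m) * wp μP (seg y (p + m) 1)) := by
                have : p₀ * θ ≤ wp μP (seg y p m) * wp μP (seg y (p + m) 1) := by
                  have h5 : θ * p₀ ≤ wp μP (seg y p m) * wp μP (seg y (p + m) 1) :=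
                    mul_le_mul hwm hlet hp₀pos.le (wp_nonneg μP (seg y p m))
                  linarith only [h5]
                exact mul_le_mul_of_nonneg_left this (Real.exp_pos _).le
            _ ≤ wp μP (seg y p ℓ) := hc1
      -- denominator facts
      have hτℓ : |τKB ℓ| ≤ (ℓ : ℝ) / 2 := by
        have h1 := hnτ ℓ (le_trans hn₁τ hcase)
        rw [Real.norm_eq_abs, Real.norm_natCast] at h1
        linarith
      have hddlb : (ℓ : ℝ) / 2 ≤ (ℓ : ℝ) + τKB ℓ := by
        have := abs_le.1 hτℓ; linarith [this.1]
      have hddub : (ℓ : ℝ) + τKB ℓ ≤ 3 * (ℓ : ℝ) / 2 := by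
        have := abs_le.1 hτℓ; linarith [this.2]
      have hddpos : 0 < (ℓ : ℝ) + τKB ℓ := by linarith
      -- floor bound
      have hfl : n / (3 * Lr) ≤ (⌊(n - (ℓ:ℝ) + 1) / ((ℓ:ℝ) + τKB ℓ)⌋ : ℝ) := by
        have h1 := Int.sub_one_lt_floor ((n - (ℓ:ℝ) + 1) / ((ℓ:ℝ) + τKB ℓ))
        have h2 : n / (3 * Lr) + 1 ≤ (n - (ℓ:ℝ) + 1) / ((ℓ:ℝ) + τKB ℓ) := by
          rw [le_div_iff₀ hddpos]
          have hu0 : (0:ℝ) ≤ n / (3 * Lr) := le_of_lt (div_pos hn0 (by linarith only [hLrpos]))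
          have e1 : (n / (3 * Lr) + 1) * ((ℓ:ℝ) + τKB ℓ) ≤
              (n / (3 * Lr) + 1) * (3 * (ℓ:ℝ) / 2) :=
            mul_le_mul_of_nonneg_left hddub (by linarith only [hu0])
          have e3 : (ℓ:ℝ) * (n / (3 * Lr)) ≤ Lr * (n / (3 * Lr)) :=
            mul_le_mul_of_nonneg_right hlen hu0
          have e4 : Lr * (n / (3 * Lr)) = n / 3 := by
            field_simp
          linarith only [e1, e3, e4, hLrn, hlen, hℓ1r]
        linarith only [h1, h2]
      -- kKB bound
      have hkKB : kKB ℓ ≤ δ * Lr := by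
        have h1 := hnk ℓ (le_trans hn₁k hcase)
        rw [Real.norm_eq_abs, Real.norm_natCast] at h1
        have h2 : kKB ℓ ≤ δ * (ℓ : ℝ) := le_trans (le_abs_self _) h1
        have h3 : δ * (ℓ : ℝ) ≤ δ * Lr := mul_le_mul_of_nonneg_left hlen hδ.le
        linarith only [h2, h3]
      -- main comparison
      have hEb : T ≤ Real.exp (-kKB ℓ) * wp μP (seg y p ℓ) *
          (⌊(n - (ℓ:ℝ) + 1) / ((ℓ:ℝ) + τKB ℓ)⌋ : ℝ) := by
        have e1 : Real.exp (-(δ * Lr)) ≤ Real.exp (-kKB ℓ) :=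
          Real.exp_le_exp.2 (by linarith)
        have hprod : Real.exp (-(δ * Lr)) * (Real.exp (-(δ * (Lr + 1))) * (p₀ * θ)) *
            (n / (3 * Lr)) ≤ Real.exp (-kKB ℓ) * wp μP (seg y p ℓ) *
            (⌊(n - (ℓ:ℝ) + 1) / ((ℓ:ℝ) + τKB ℓ)⌋ : ℝ) := by
          apply mul_le_mul _ hfl (le_of_lt (div_pos hn0 (by linarith only [hLrpos])))
            (mul_nonneg (Real.exp_pos _).le hwpos.le)
          exact mul_le_mul e1 hlb
            (mul_nonneg (Real.exp_pos _).le (mul_nonneg hp₀pos.le hθpos.le)) (Real.exp_pos _).le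
        refine le_trans ?_ hprod
        have h2δ : Real.exp (-(δ * Lr)) * Real.exp (-(δ * (Lr + 1))) =
            Real.exp (-δ) * n ^ (-(ε/8)) := by
          rw [← Real.exp_add, Real.rpow_def_of_pos hn0, ← Real.exp_add, ← hldef]
          congr 1
          rw [hδdef, hLrdef]
          field_simp
          ring
        have hθn : θ * n = n ^ ε := by
          rw [hθdef, ← Real.rpow_add_one (ne_of_gt hn0), show (-1 + ε) + 1 = ε by ring]
        have hsplit : n ^ (-(ε/8)) * n ^ ε = n ^ (7*ε/8) := by
          rw [← Real.rpow_add hn0, show -(ε/8) + ε = 7*ε/8 by ring]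
        have h78 : n ^ (7*ε/8) = n ^ (ε/4) * n ^ (5*ε/8) := by
          rw [← Real.rpow_add hn0, show ε/4 + 5*ε/8 = 7*ε/8 by ring]
        have hRHS : Real.exp (-(δ * Lr)) * (Real.exp (-(δ * (Lr + 1))) * (p₀ * θ)) *
            (n / (3 * Lr)) = Real.exp (-δ) * p₀ * n ^ (7*ε/8) / (3 * Lr) := by
          calc Real.exp (-(δ * Lr)) * (Real.exp (-(δ * (Lr + 1))) * (p₀ * θ)) * (n / (3 * Lr))
              = (Real.exp (-(δ * Lr)) * Real.exp (-(δ * (Lr + 1)))) * (p₀ * (θ * n)) /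
                (3 * Lr) := by ring
            _ = (Real.exp (-δ) * n ^ (-(ε/8))) * (p₀ * n ^ ε) / (3 * Lr) := by
                rw [h2δ, hθn]
            _ = Real.exp (-δ) * p₀ * (n ^ (-(ε/8)) * n ^ ε) / (3 * Lr) := by ring
            _ = Real.exp (-δ) * p₀ * n ^ (7*ε/8) / (3 * Lr) := by rw [hsplit]
        rw [hRHS, hTdef]
        have h4 : (0:ℝ) ≤ n ^ (ε/4) := Real.rpow_nonneg hn0.le _
        have hnum : n ^ (ε/4) ≤ Real.exp (-δ) * p₀ * n ^ (7*ε/8) := by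
          rw [h78]
          have h7 : Real.exp δ ≤ n ^ (5*ε/8) * p₀ := (div_le_iff₀ hp₀pos).1 hF7'
          have hinv2 : Real.exp (-δ) * Real.exp δ * n ^ (ε/4) = n ^ (ε/4) := by
            rw [← Real.exp_add]
            simp
          have hint := mul_le_mul_of_nonneg_left h7
            (mul_nonneg (Real.exp_pos (-δ)).le h4)
          linarith only [hint, hinv2]
        gcongr
      calc μP {x | ¬ appears N x (seg y p ℓ)}
          ≤ ENNReal.ofReal (Real.exp (-(Real.exp (-kKB ℓ) * wp μP (seg y p ℓ) *
            (⌊(n - (ℓ:ℝ) + 1) / ((ℓ:ℝ) + τKB ℓ)⌋ : ℝ)))) :=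
            by
              have hfb := failure_le μP hPKB (seg y p ℓ) (by omega : ℓ ≤ N)
              rw [← hndef] at hfb
              exact hfb
        _ ≤ ENNReal.ofReal (Real.exp (-T)) :=
            ENNReal.ofReal_le_ofReal (Real.exp_le_exp.2 (neg_le_neg hEb))
    · -- short words
      push_neg at hcase
      have hq1 : min p (N - n₁) ≤ p := min_le_left _ _
      have hq2 : min p (N - n₁) ≤ N - n₁ := min_le_right _ _
      have hqor : min p (N - n₁) = p ∨ min p (N - n₁) = N - n₁ := min_choice _ _
      have hqN : min p (N - n₁) + n₁ ≤ N := by rcases hqor with h | h <;> omega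
      have hcov : p + ℓ ≤ min p (N - n₁) + n₁ := by rcases hqor with h | h <;> omega
      have hsub : {x : ℕ → A | ¬ appears N x (seg y p ℓ)} ⊆
          {x | ¬ appears N x (seg y (min p (N - n₁)) n₁)} :=
        fun x hx => not_appears_mono x y hq1 hcov hx
      have hwq : c₁ ≤ wp μP (seg y (min p (N - n₁)) n₁) :=
        hc₁le _ (seg_pos μP hPstat hyP _ n₁)
      have hwqpos : 0 < wp μP (seg y (min p (N - n₁)) n₁) :=
        wp_pos μP (seg_pos μP hPstat hyP _ n₁)
      have hfl' : n / (2 * D) ≤ (⌊(n - (n₁:ℝ) + 1) / ((n₁:ℝ) + τKB n₁)⌋ : ℝ) := by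
        have h1 := Int.sub_one_lt_floor ((n - (n₁:ℝ) + 1) / ((n₁:ℝ) + τKB n₁))
        have h2 : n / (2 * D) + 1 ≤ (n - (n₁:ℝ) + 1) / ((n₁:ℝ) + τKB n₁) := by
          rw [← hDdef, le_div_iff₀ hDpos]
          have hu : n / (2 * D) * (2 * D) = n :=
            div_mul_cancel₀ _ (by linarith only [hDpos] : (2 * D : ℝ) ≠ 0)
          linarith only [hu, hF9']
        linarith
      have hEb : T ≤ Real.exp (-kKB n₁) * wp μP (seg y (min p (N - n₁)) n₁) *
          (⌊(n - (n₁:ℝ) + 1) / ((n₁:ℝ) + τKB n₁)⌋ : ℝ) := by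
        have hhalf : n ^ ((1:ℝ)/2) * n ^ ((1:ℝ)/2) = n := by
          rw [← Real.rpow_add hn0]; norm_num
        have hhpos : 0 < n ^ ((1:ℝ)/2) := Real.rpow_pos_of_pos hn0 _
        have h14 : n ^ (ε/4) ≤ n ^ ((1:ℝ)/2) :=
          Real.rpow_le_rpow_of_exponent_le hn1 (by linarith)
        have hTle : T ≤ G / 6 * n ^ ((1:ℝ)/2) := by
          have hTeq : T = n ^ (ε/4) * G / (6 * l) := by
            rw [hTdef, hLrdef]; field_simp; ring
          rw [hTeq]
          have hstep1 : n ^ (ε/4) * G / (6 * l) ≤ n ^ (ε/4) * G / 6 := by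
            rw [div_le_div_iff₀ (by linarith only [hl1] : (0:ℝ) < 6 * l) (by norm_num : (0:ℝ) < 6)]
            have h6 : (0:ℝ) ≤ n ^ (ε/4) * G * (l - 1) :=
              mul_nonneg (mul_nonneg (Real.rpow_nonneg hn0.le _) hG.le)
                (by linarith only [hl1])
            linarith only [h6]
          have hstep2 : n ^ (ε/4) * G / 6 ≤ G / 6 * n ^ ((1:ℝ)/2) := by
            rw [show n ^ (ε/4) * G / 6 = G / 6 * n ^ (ε/4) by ring]
            exact mul_le_mul_of_nonneg_left h14 (by linarith only [hG] : (0:ℝ) ≤ G / 6)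
          linarith
        have hlin : G / 6 * n ^ ((1:ℝ)/2) ≤ a₁ * c₁ / (2 * D) * n := by
          have he1 : G / 6 * n ^ ((1:ℝ)/2) = a₁ * c₁ / (2 * D) * (K * n ^ ((1:ℝ)/2)) := by
            rw [hKdef]
            field_simp
            ring
          rw [he1]
          have he2 : K * n ^ ((1:ℝ)/2) ≤ n ^ ((1:ℝ)/2) * n ^ ((1:ℝ)/2) :=
            mul_le_mul_of_nonneg_right hF8' hhpos.le
          rw [hhalf] at he2
          exact mul_le_mul_of_nonneg_left he2
            (le_of_lt (div_pos (mul_pos ha₁pos hc₁pos) (by linarith only [hDpos])))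
        calc T ≤ a₁ * c₁ * (n / (2 * D)) := by
              have : a₁ * c₁ / (2 * D) * n = a₁ * c₁ * (n / (2 * D)) := by ring
              linarith [hTle, hlin]
          _ ≤ Real.exp (-kKB n₁) * wp μP (seg y (min p (N - n₁)) n₁) *
              (⌊(n - (n₁:ℝ) + 1) / ((n₁:ℝ) + τKB n₁)⌋ : ℝ) := by
              rw [← ha₁def]
              apply mul_le_mul _ hfl' (le_of_lt (div_pos hn0 (by linarith only [hDpos])))
                (mul_nonneg ha₁pos.le hwqpos.le)
              exact mul_le_mul_of_nonneg_left hwq ha₁pos.le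
      calc μP {x | ¬ appears N x (seg y p ℓ)}
          ≤ μP {x | ¬ appears N x (seg y (min p (N - n₁)) n₁)} := measure_mono hsub
        _ ≤ ENNReal.ofReal (Real.exp (-(Real.exp (-kKB n₁) *
            wp μP (seg y (min p (N - n₁)) n₁) *
            (⌊(n - (n₁:ℝ) + 1) / ((n₁:ℝ) + τKB n₁)⌋ : ℝ)))) :=
            by
              have hfb := failure_le μP hPKB (seg y (min p (N - n₁)) n₁)
                (by omega : n₁ ≤ N)
              rw [← hndef] at hfb
              exact hfb
        _ ≤ ENNReal.ofReal (Real.exp (-T)) :=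
            ENNReal.ofReal_le_ofReal (Real.exp_le_exp.2 (neg_le_neg hEb))
  -- union bound
  have hsub2 : {x : ℕ → A | ∃ j < c, ¬ appears N x (seg y (auxPos μP θ N y j)
      (auxWordLen μP θ N y j))} ⊆ ⋃ j ∈ Finset.range c,
      {x : ℕ → A | ¬ appears N x (seg y (auxPos μP θ N y j) (auxWordLen μP θ N y j))} := by
    rintro x ⟨j, hj, hx⟩
    exact Set.mem_biUnion (Finset.mem_range.2 hj) hx
  have hms : μP {x : ℕ → A | ∃ j < c, ¬ appears N x (seg y (auxPos μP θ N y j)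
      (auxWordLen μP θ N y j))} ≤ ENNReal.ofReal (n * Real.exp (-T)) := by
    calc μP {x : ℕ → A | ∃ j < c, ¬ appears N x (seg y (auxPos μP θ N y j)
          (auxWordLen μP θ N y j))}
        ≤ μP (⋃ j ∈ Finset.range c,
          {x : ℕ → A | ¬ appears N x (seg y (auxPos μP θ N y j) (auxWordLen μP θ N y j))}) :=
          measure_mono hsub2
      _ ≤ ∑ j ∈ Finset.range c, μP {x : ℕ → A | ¬ appears N x (seg y (auxPos μP θ N y j)
          (auxWordLen μP θ N y j))} := measure_biUnion_finset_le _ _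
      _ ≤ ∑ j ∈ Finset.range c, ENNReal.ofReal (Real.exp (-T)) :=
          Finset.sum_le_sum fun j hj => hkey j (Finset.mem_range.1 hj)
      _ = (c : ℝ≥0∞) * ENNReal.ofReal (Real.exp (-T)) := by
          rw [Finset.sum_const, Finset.card_range, nsmul_eq_mul]
      _ ≤ (N : ℝ≥0∞) * ENNReal.ofReal (Real.exp (-T)) := by
          apply mul_le_mul_left
          exact_mod_cast auxCount_le μP θ N y
      _ = ENNReal.ofReal (n * Real.exp (-T)) := by
          rw [hndef, ENNReal.ofReal_mul (Nat.cast_nonneg N), ENNReal.ofReal_natCast]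
  exact ENNReal.toReal_le_of_le_ofReal (mul_nonneg hn0.le (Real.exp_pos _).le) hms

end ZM
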